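/- Let n ≥ 2 and let A = [a_ij] be the n×n tridiagonal (0,1)-matrix with a_ij = 1 whenever |i−j| ≤ 1 and a_ij = 0 otherwise. Then the linear system x_{i−1} + 4x_i + x_{i+1} = 2 for i = 1,…,n−1, with the convention x_0 = x_n = 0, has a unique solution (x_1,…,x_{n−1}); this solution satisfies x_i > 0 for i = 1,…,n−1 and x_{i−1} + x_i < 1 for i = 1,…,n; and the symmetric tridiagonal matrix X = X(x) with superdiagonal and subdiagonal entries x_{i,i+1} = x_{i+1,i} = x_i (i = 1,…,n−1), main diagonal entries x_{ii} = 1 − x_{i−1} − x_i (i = 1,…,n), and all other entries zero, is an RCDS doubly stochastic matrix with ξ(X) = ξ(A). In particular, A is the pattern of an RCDS doubly stochastic matrix. -/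

import Mathlib

/-- `X` is doubly stochastic. -/
def DoublyStochastic {n : ℕ} (X : Matrix (Fin n) (Fin n) ℝ) : Prop :=
  (∀ i j, 0 ≤ X i j) ∧ (∀ i, ∑ j, X i j = 1) ∧ (∀ j, ∑ i, X i j = 1)

/-- `X` has restricted constant diagonal sums. -/
def RCDS {n : ℕ} (X : Matrix (Fin n) (Fin n) ℝ) : Prop :=
  ∀ σ τ : Equiv.Perm (Fin n), (∀ i, 0 < X i (σ i)) → (∀ i, 0 < X i (τ i)) →
    ∑ i, X i (σ i) = ∑ i, X i (τ i)

/-- Auxiliary two-step recursive sequence: `s 0 = 0`, `s 1 = b`,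
`s (i+2) = c - s i - 4 s (i+1)`. -/
def tseq (b c : ℝ) : ℕ → ℝ
  | 0 => 0
  | 1 => b
  | (i+2) => c - tseq b c i - 4 * tseq b c (i+1)

lemma tseq_step (b c : ℝ) (i : ℕ) :
    tseq b c (i+2) = c - tseq b c i - 4 * tseq b c (i+1) := rfl

lemma q_grow (i : ℕ) :
    1 ≤ |tseq 1 0 (i+1)| ∧ |tseq 1 0 i| ≤ |tseq 1 0 (i+1)| := by
  induction i with
  | zero => refine ⟨?_, ?_⟩ <;> simp [tseq]
  | succ k ih =>
    obtain ⟨h1, h2⟩ := ih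
    have h3 : tseq 1 0 (k+2) = -(tseq 1 0 k + 4 * tseq 1 0 (k+1)) := by
      rw [tseq_step]; ring
    have h4 : 4 * |tseq 1 0 (k+1)| - |tseq 1 0 k| ≤ |tseq 1 0 (k+2)| := by
      rw [h3, abs_neg]
      have h5 : |4 * tseq 1 0 (k+1)| - |(- tseq 1 0 k)| ≤
          |4 * tseq 1 0 (k+1) - (- tseq 1 0 k)| := abs_sub_abs_le_abs_sub _ _
      rw [abs_mul, abs_neg] at h5
      have h7 : |4 * tseq 1 0 (k+1) - -tseq 1 0 k| = |tseq 1 0 k + 4 * tseq 1 0 (k+1)| := by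
        ring_nf
      rw [h7] at h5
      have h6 : |(4:ℝ)| = 4 := by norm_num
      rw [h6] at h5
      linarith
    constructor <;> linarith

lemma q_ne (n : ℕ) (hn : 1 ≤ n) : tseq 1 0 n ≠ 0 := by
  obtain ⟨k, rfl⟩ : ∃ k, n = k + 1 := ⟨n - 1, by omega⟩
  have h := (q_grow k).1
  intro hc
  rw [hc] at h
  norm_num at h

/-- Existence of a solution of the boundary value problem (satisfying the
recurrence for all indices). -/
lemma exists_aux (n : ℕ) (hn : 2 ≤ n) :
    ∃ x : ℕ → ℝ, x 0 = 0 ∧ x n = 0 ∧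
      ∀ k, x k + 4 * x (k + 1) + x (k + 2) = 2 := by
  have hqn : tseq 1 0 n ≠ 0 := q_ne n (by omega)
  refine ⟨fun i => tseq 0 2 i + (-(tseq 0 2 n) / tseq 1 0 n) * tseq 1 0 i, ?_, ?_, ?_⟩
  · simp [tseq]
  · field_simp; ring
  · intro k
    simp only [tseq_step]
    ring

/-- Uniqueness of the solution of the boundary value problem. -/
lemma unique_aux (n : ℕ) (hn : 2 ≤ n) (x x' : ℕ → ℝ)
    (hx0 : x 0 = 0) (hxn : x n = 0)
    (hrec : ∀ i, 1 ≤ i → i ≤ n - 1 → x (i - 1) + 4 * x i + x (i + 1) = 2)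
    (h0' : x' 0 = 0) (hn' : x' n = 0)
    (hrec' : ∀ i, 1 ≤ i → i ≤ n - 1 → x' (i - 1) + 4 * x' i + x' (i + 1) = 2) :
    ∀ i, 1 ≤ i → i ≤ n - 1 → x' i = x i := by
  intro i h1i h2i
  set d : ℕ → ℝ := fun j => x' j - x j with hd
  have hdrec : ∀ k, k + 2 ≤ n → d (k + 2) = - d k - 4 * d (k + 1) := by
    intro k hk
    have h1 := hrec' (k + 1) (by omega) (by omega)
    have h2 := hrec (k + 1) (by omega) (by omega)
    simp only [Nat.add_sub_cancel] at h1 h2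
    simp only [hd]
    linarith
  have key : ∀ k, k + 1 ≤ n →
      d k = d 1 * tseq 1 0 k ∧ d (k + 1) = d 1 * tseq 1 0 (k + 1) := by
    intro k
    induction k with
    | zero =>
      intro _
      constructor
      · have hd0 : d 0 = 0 := by simp [hd, h0', hx0]
        have hq0 : tseq 1 0 0 = 0 := rfl
        rw [hd0, hq0]; ring
      · have hq1 : tseq 1 0 1 = 1 := rfl
        rw [hq1]; ring
    | succ k ih =>
      intro hk
      obtain ⟨ihk, ihk1⟩ := ih (by omega)
      refine ⟨ihk1, ?_⟩
      rw [hdrec k (by omega), ihk, ihk1]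
      have hq2 : tseq 1 0 (k + 2) = - tseq 1 0 k - 4 * tseq 1 0 (k + 1) := by
        rw [tseq_step]; ring
      rw [hq2]; ring
  have hd1 : d 1 = 0 := by
    have hdn : d n = 0 := by simp [hd, hn', hxn]
    obtain ⟨m, hm⟩ : ∃ m, n = m + 1 := ⟨n - 1, by omega⟩
    have hkey := (key m (by omega)).2
    rw [← hm, hdn] at hkey
    rcases mul_eq_zero.mp hkey.symm with h | h
    · exact h
    · exact absurd h (q_ne n (by omega))
  have hki := (key i (by omega)).1
  rw [hd1] at hki
  simp only [hd] at hki
  linarith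

lemma bounds_aux (n : ℕ) (hn : 2 ≤ n) (x : ℕ → ℝ) (hx0 : x 0 = 0) (hxn : x n = 0)
    (hrec : ∀ k, x k + 4 * x (k + 1) + x (k + 2) = 2) :
    (∀ j, j ≤ n → 0 ≤ x j) ∧ (∀ j, j ≤ n → x j ≤ 1/2) := by
  obtain ⟨im, him, hmin⟩ := Finset.exists_min_image (Finset.range (n+1)) x ⟨0, by simp⟩
  obtain ⟨iM, hiM, hmax⟩ := Finset.exists_max_image (Finset.range (n+1)) x ⟨0, by simp⟩
  rw [Finset.mem_range] at him hiM
  have hmin' : ∀ j, j ≤ n → x im ≤ x j := fun j hj =>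
    hmin j (Finset.mem_range.mpr (by omega))
  have hmax' : ∀ j, j ≤ n → x j ≤ x iM := fun j hj =>
    hmax j (Finset.mem_range.mpr (by omega))
  have hm0 : x im ≤ 0 := by have := hmin' 0 (by omega); rwa [hx0] at this
  have hM0 : 0 ≤ x iM := by have := hmax' 0 (by omega); rwa [hx0] at this
  -- key inequality : 4 * M ≤ 2 - 2 * m
  have hMm : 4 * x iM ≤ 2 - 2 * x im := by
    by_cases hb : iM = 0 ∨ iM = n
    · have : x iM = 0 := by rcases hb with h | h <;> rw [h] <;> assumption
      rw [this]; linarith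
    · push_neg at hb
      obtain ⟨k, hk⟩ : ∃ k, iM = k + 1 := ⟨iM - 1, by omega⟩
      have h1 := hrec k
      have h2 := hmin' k (by omega)
      have h3 := hmin' (k + 2) (by omega)
      rw [show k + 1 = iM from hk.symm] at h1
      linarith
  have hmnn : 0 ≤ x im := by
    by_contra hneg
    push_neg at hneg
    have hb : im ≠ 0 ∧ im ≠ n := by
      constructor
      · intro h; rw [h, hx0] at hneg; linarith
      · intro h; rw [h, hxn] at hneg; linarith
    obtain ⟨k, hk⟩ : ∃ k, im = k + 1 := ⟨im - 1, by omega⟩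
    have h1 := hrec k
    have h2 := hmax' k (by omega)
    have h3 := hmax' (k + 2) (by omega)
    rw [show k + 1 = im from hk.symm] at h1
    linarith
  refine ⟨fun j hj => le_trans hmnn (hmin' j hj), fun j hj => le_trans (hmax' j hj) ?_⟩
  linarith

theorem tridiagonal_rcds (n : ℕ) (hn : 2 ≤ n)
    (A : Matrix (Fin n) (Fin n) ℝ)
    (hA : ∀ i j, A i j =
      if ((i : ℕ) ≤ (j : ℕ) + 1 ∧ (j : ℕ) ≤ (i : ℕ) + 1) then 1 else 0) :
    ∃ x : ℕ → ℝ,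
      x 0 = 0 ∧ x n = 0 ∧
      (∀ i, 1 ≤ i → i ≤ n - 1 → x (i - 1) + 4 * x i + x (i + 1) = 2) ∧
      (∀ x' : ℕ → ℝ, x' 0 = 0 → x' n = 0 →
        (∀ i, 1 ≤ i → i ≤ n - 1 → x' (i - 1) + 4 * x' i + x' (i + 1) = 2) →
        ∀ i, 1 ≤ i → i ≤ n - 1 → x' i = x i) ∧
      (∀ i, 1 ≤ i → i ≤ n - 1 → 0 < x i) ∧
      (∀ i, 1 ≤ i → i ≤ n → x (i - 1) + x i < 1) ∧
      (∀ X : Matrix (Fin n) (Fin n) ℝ,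
        (∀ i j, X i j =
          if (j : ℕ) = (i : ℕ) + 1 then x ((i : ℕ) + 1)
          else if (i : ℕ) = (j : ℕ) + 1 then x ((j : ℕ) + 1)
          else if i = j then 1 - x (i : ℕ) - x ((i : ℕ) + 1)
          else 0) →
        DoublyStochastic X ∧ RCDS X ∧ (∀ i j, X i j = 0 ↔ A i j = 0)) := by
  classical
  obtain ⟨x, hx0, hxn, hrecAll⟩ := exists_aux n hn
  have hrecStated : ∀ i, 1 ≤ i → i ≤ n - 1 → x (i - 1) + 4 * x i + x (i + 1) = 2 := by
    intro i h1 h2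
    obtain ⟨k, rfl⟩ : ∃ k, i = k + 1 := ⟨i - 1, by omega⟩
    simpa only [Nat.add_sub_cancel] using hrecAll k
  obtain ⟨hnn, h12⟩ := bounds_aux n hn x hx0 hxn hrecAll
  have h14 : ∀ k, 1 ≤ k → k + 1 ≤ n → 1/4 ≤ x k := by
    intro k h1 h2
    obtain ⟨j, rfl⟩ : ∃ j, k = j + 1 := ⟨k - 1, by omega⟩
    have h3 := hrecAll j
    have a := h12 j (by omega)
    have b := h12 (j + 2) (by omega)
    linarith
  have hb1 : ∀ k, k + 3 ≤ n → x (k + 1) ≤ 7/16 := by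
    intro k h
    have h3 := hrecAll k
    have a := hnn k (by omega)
    have b := h14 (k + 2) (by omega) (by omega)
    linarith
  have hb2 : ∀ k, k + 3 ≤ n → 17/64 ≤ x (k + 2) := by
    intro k h
    have h3 := hrecAll (k + 1)
    have a := hb1 k h
    have b := h12 (k + 3) (by omega)
    linarith
  have hbnd : ∀ i, 1 ≤ i → i ≤ n → x (i - 1) + x i < 1 := by
    intro i h1 h2
    obtain ⟨k, rfl⟩ : ∃ k, i = k + 1 := ⟨i - 1, by omega⟩
    simp only [Nat.add_sub_cancel]
    by_cases hc1 : k + 1 = n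
    · have a := h12 k (by omega)
      rw [hc1, hxn]
      linarith
    · have hrk := hrecAll k
      by_cases hc2 : k + 2 = n
      · have hxk2 : x (k + 2) = 0 := by rw [hc2, hxn]
        have a := h12 k (by omega)
        linarith
      · have h3 : k + 3 ≤ n := by omega
        have a := h14 (k + 1) (by omega) (by omega)
        have b := hb2 k h3
        linarith
  refine ⟨x, hx0, hxn, hrecStated, ?_, ?_, hbnd, ?_⟩
  · exact fun x' h0' hn' hrec' =>
      unique_aux n hn x x' hx0 hxn hrecStated h0' hn' hrec'
  · intro i h1 h2
    have := h14 i h1 (by omega)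
    linarith
  · -- the matrix part
    intro X hX
    have hkey : ∀ (i j : Fin n), X i j =
        (if j = i then (1 - x (i:ℕ) - x ((i:ℕ)+1)) else 0)
        + (if ((j:ℕ) = (i:ℕ)+1) then x ((i:ℕ)+1) else 0)
        + (if ((i:ℕ) = (j:ℕ)+1) then x ((j:ℕ)+1) else 0) := by
      intro i j
      rw [hX i j]
      simp only [Fin.ext_iff]
      split_ifs <;> first | ring1 | (exfalso; omega)
    have hsym : ∀ i j, X i j = X j i := by
      intro i j
      rcases eq_or_ne i j with rfl | hne
      · rfl
      · have hne' : (i:ℕ) ≠ (j:ℕ) := fun hc => hne (Fin.ext hc)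
        rw [hX i j, hX j i]
        simp only [Fin.ext_iff]
        split_ifs <;> first | rfl | (exfalso; omega)
    have hrow : ∀ i : Fin n, ∑ j, X i j = 1 := by
      intro i
      have hi := i.isLt
      have e1 : ∑ j : Fin n, (if j = i then (1 - x (i:ℕ) - x ((i:ℕ)+1)) else 0)
          = 1 - x (i:ℕ) - x ((i:ℕ)+1) := by
        rw [Finset.sum_ite_eq' Finset.univ i (fun _ => (1 - x (i:ℕ) - x ((i:ℕ)+1)))]
        simp
      have e2 : ∑ j : Fin n, (if ((j:ℕ) = (i:ℕ)+1) then x ((i:ℕ)+1) else 0)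
          = x ((i:ℕ)+1) := by
        by_cases hlt : (i:ℕ)+1 < n
        · have hc : ∀ j : Fin n, ((j:ℕ) = (i:ℕ)+1) ↔ (j = ⟨(i:ℕ)+1, hlt⟩) := by
            intro j; rw [Fin.ext_iff]
          rw [Finset.sum_congr rfl (fun j _ => by rw [if_congr (hc j) rfl rfl])]
          rw [Finset.sum_ite_eq' Finset.univ (⟨(i:ℕ)+1, hlt⟩ : Fin n)
            (fun _ => x ((i:ℕ)+1))]
          simp
        · have hin : (i:ℕ) + 1 = n := by omega
          have hz : ∑ j : Fin n, (if ((j:ℕ) = (i:ℕ)+1) then x ((i:ℕ)+1) else 0) = 0 :=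
            Finset.sum_eq_zero (fun j _ => if_neg (by have := j.isLt; omega))
          rw [hz, hin, hxn]
      have e3 : ∑ j : Fin n, (if ((i:ℕ) = (j:ℕ)+1) then x ((j:ℕ)+1) else 0)
          = x (i:ℕ) := by
        by_cases hpos : 0 < (i:ℕ)
        · have hlt : (i:ℕ) - 1 < n := by omega
          have hc : ∀ j : Fin n, ((i:ℕ) = (j:ℕ)+1) ↔ (j = ⟨(i:ℕ)-1, hlt⟩) := by
            intro j; rw [Fin.ext_iff]; simp only []; omega
          rw [Finset.sum_congr rfl (fun j _ => by rw [if_congr (hc j) rfl rfl])]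
          rw [Finset.sum_ite_eq' Finset.univ (⟨(i:ℕ)-1, hlt⟩ : Fin n)
            (fun j => x ((j:ℕ)+1))]
          simp only [Finset.mem_univ, if_true]
          congr 1
          omega
        · have hi0 : (i:ℕ) = 0 := by omega
          have hz : ∑ j : Fin n, (if ((i:ℕ) = (j:ℕ)+1) then x ((j:ℕ)+1) else 0) = 0 :=
            Finset.sum_eq_zero (fun j _ => if_neg (by omega))
          rw [hz, hi0, hx0]
      calc ∑ j, X i j
          = ∑ j : Fin n, ((if j = i then (1 - x (i:ℕ) - x ((i:ℕ)+1)) else 0)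
            + (if ((j:ℕ) = (i:ℕ)+1) then x ((i:ℕ)+1) else 0)
            + (if ((i:ℕ) = (j:ℕ)+1) then x ((j:ℕ)+1) else 0)) :=
            Finset.sum_congr rfl (fun j _ => hkey i j)
        _ = 1 := by
            rw [Finset.sum_add_distrib, Finset.sum_add_distrib, e1, e2, e3]
            ring
    have hcol : ∀ j : Fin n, ∑ i, X i j = 1 := by
      intro j
      rw [Finset.sum_congr rfl (fun i _ => hsym i j)]
      exact hrow j
    have hent : ∀ i j, 0 ≤ X i j := by
      intro i j
      have hi := i.isLt
      have hj := j.isLt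
      rw [hX i j]
      split_ifs with h1 h2 h3
      · exact hnn ((i:ℕ)+1) (by omega)
      · exact hnn ((j:ℕ)+1) (by omega)
      · have := hbnd ((i:ℕ)+1) (by omega) (by omega)
        simp only [Nat.add_sub_cancel] at this
        linarith
      · exact le_refl 0
    refine ⟨⟨hent, hrow, hcol⟩, ?_, ?_⟩
    · -- RCDS
      have hdiagsum : ∀ σ : Equiv.Perm (Fin n), (∀ i, 0 < X i (σ i)) →
          ∑ i, X i (σ i) = 2 * ∑ i : Fin n, (1 - x (i:ℕ) - x ((i:ℕ)+1))/2 := by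
        intro σ hσ
        have hterm : ∀ i, X i (σ i) =
            (1 - x (i:ℕ) - x ((i:ℕ)+1))/2
            + (1 - x ((σ i : ℕ)) - x ((σ i : ℕ)+1))/2 := by
          intro i
          have hpos := hσ i
          rw [hX i (σ i)] at hpos ⊢
          split_ifs with h1 h2 h3
          · rw [h1]
            have hr := hrecAll (i:ℕ)
            have e : x ((i:ℕ)+1+1) = x ((i:ℕ)+2) := by norm_num
            rw [e]
            linarith
          · rw [h2]
            have hr := hrecAll ((σ i : ℕ))
            have e : x (((σ i : ℕ))+1+1) = x (((σ i : ℕ))+2) := by norm_num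
            rw [e]
            linarith
          · rw [← h3]
            ring
          · rw [if_neg h1, if_neg h2, if_neg h3] at hpos
            exact absurd hpos (lt_irrefl (0:ℝ))
        rw [Finset.sum_congr rfl (fun i _ => hterm i), Finset.sum_add_distrib,
          Equiv.sum_comp σ (fun i : Fin n => (1 - x (i:ℕ) - x ((i:ℕ)+1))/2)]
        ring
      intro σ τ hσ hτ
      rw [hdiagsum σ hσ, hdiagsum τ hτ]
    · -- pattern
      intro i j
      have hi := i.isLt
      have hj := j.isLt
      rw [hX i j, hA i j]
      simp only [Fin.ext_iff]
      split_ifs with h1 h2 h3 h4 h5 h6 h7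
      · have hp1 : (0:ℝ) < x ((i:ℕ)+1) := by
          have := h14 ((i:ℕ)+1) (by omega) (by omega)
          linarith
        exact ⟨fun h => absurd h (ne_of_gt hp1), fun h => absurd h one_ne_zero⟩
      · omega
      · have hp1 : (0:ℝ) < x ((j:ℕ)+1) := by
          have := h14 ((j:ℕ)+1) (by omega) (by omega)
          linarith
        exact ⟨fun h => absurd h (ne_of_gt hp1), fun h => absurd h one_ne_zero⟩
      · omega
      · have hp1 : (0:ℝ) < 1 - x (i:ℕ) - x ((i:ℕ)+1) := by
          have := hbnd ((i:ℕ)+1) (by omega) (by omega)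
          simp only [Nat.add_sub_cancel] at this
          linarith
        exact ⟨fun h => absurd h (ne_of_gt hp1), fun h => absurd h one_ne_zero⟩
      · omega
      · omega
      · simp
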